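/- For integers i, j with t/2 < j - i ≤ t - 1 in the distance graph D(t-1,t) with t ≥ 2, the graph distance satisfies d(i,j) ≤ 2(t - j + i) + 1 ≤ t. -/

import Mathlib

/-- The infinite distance graph on `ℤ` with distance set `D`: distinct integers
`i, j` are adjacent iff `|i - j| ∈ D`. -/
def distGraph (D : Set ℤ) : SimpleGraph ℤ where
  Adj i j := i ≠ j ∧ |i - j| ∈ D
  symm := by
    constructor
    intro i j h
    exact ⟨h.1.symm, by rw [abs_sub_comm]; exact h.2⟩
  loopless := by
    constructor
    intro i h
    exact h.1 rfl

lemma distGraph_adj_aux (t : ℤ) (ht : 2 ≤ t) (a b : ℤ)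
    (h : b - a = t - 1 ∨ b - a = t) : (distGraph {t - 1, t}).Adj a b := by
  constructor
  · rcases h with h | h <;> intro hab <;> omega
  · have hab : |a - b| = b - a := by
      rw [abs_sub_comm]; exact abs_of_nonneg (by omega)
    rcases h with h | h
    · rw [hab, h]; exact Set.mem_insert _ _
    · rw [hab, h]; exact Set.mem_insert_iff.mpr (Or.inr rfl)

lemma distGraph_walk_aux (t : ℤ) (ht : 2 ≤ t) (k : ℕ) : ∀ i : ℤ,
    ∃ w : (distGraph {t - 1, t}).Walk i (i + t - (k : ℤ)), w.length = 2 * k + 1 := by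
  induction k with
  | zero =>
    intro i
    have hadj : (distGraph {t - 1, t}).Adj i (i + t - ((0 : ℕ) : ℤ)) :=
      distGraph_adj_aux t ht _ _ (by right; push_cast; ring)
    exact ⟨SimpleGraph.Walk.cons hadj SimpleGraph.Walk.nil, rfl⟩
  | succ k ih =>
    intro i
    obtain ⟨w, hw⟩ := ih (i - 1)
    have h1 : (distGraph {t - 1, t}).Adj i (i + (t - 1)) :=
      distGraph_adj_aux t ht _ _ (by left; ring)
    have h2 : (distGraph {t - 1, t}).Adj (i + (t - 1)) (i - 1) :=
      (distGraph_adj_aux t ht _ _ (by right; ring)).symm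
    have heq : i - 1 + t - (k : ℤ) = i + t - ((k + 1 : ℕ) : ℤ) := by push_cast; ring
    refine ⟨SimpleGraph.Walk.cons h1 (SimpleGraph.Walk.cons h2 (w.copy rfl heq)), ?_⟩
    simp [SimpleGraph.Walk.length_copy, hw]
    omega

/-- In `D(t-1,t)` with `t ≥ 2`, if `t/2 < j - i ≤ t - 1` then
`d(i,j) ≤ 2(t - j + i) + 1 ≤ t`. -/
theorem distGraph_tsub1_t_dist_large (t : ℤ) (ht : 2 ≤ t) (i j : ℤ)
    (h0 : t < 2 * (j - i)) (h1 : j - i ≤ t - 1) :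
    ((distGraph {t - 1, t}).dist i j : ℤ) ≤ 2 * (t - j + i) + 1 ∧
      2 * (t - j + i) + 1 ≤ t := by
  set k : ℕ := (t - j + i).toNat with hk
  have hkz : (k : ℤ) = t - j + i := by omega
  have hj : j = i + t - (k : ℤ) := by omega
  obtain ⟨w, hw⟩ := distGraph_walk_aux t ht k i
  have hd : (distGraph {t - 1, t}).dist i j ≤ 2 * k + 1 := by
    have := SimpleGraph.dist_le (w.copy rfl hj.symm)
    rwa [SimpleGraph.Walk.length_copy, hw] at this
  constructor
  · have : ((distGraph {t - 1, t}).dist i j : ℤ) ≤ 2 * (k : ℤ) + 1 := by exact_mod_cast hd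
    omega
  · omega
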